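/- For every natural number n ≥ 2 there exist a complex Hilbert space H and a bounded operator T on H with polar decomposition T = U|T| such that T is n-centered but T is not (n+1)-centered. -/

import Mathlib

set_option synthInstance.maxHeartbeats 2000000
set_option maxHeartbeats 2000000

open ContinuousLinearMap

variable {H : Type*} [NormedAddCommGroup H] [InnerProductSpace ℂ H] [CompleteSpace H]

/-- The absolute value `|T| = (T^*T)^(1/2)` of a bounded operator on a complex
Hilbert space, defined via the continuous functional calculus. -/
noncomputable def absOp (T : H →L[ℂ] H) : H →L[ℂ] H :=
  cfc Real.sqrt (adjoint T * T)

/-- The orthogonal projection of `H` onto the closure of the range of `T`,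
regarded as an operator on `H`. -/
noncomputable def rangeProjOp (T : H →L[ℂ] H) : H →L[ℂ] H :=
  (LinearMap.range (T : H →ₗ[ℂ] H)).topologicalClosure.subtypeL ∘L
    (LinearMap.range (T : H →ₗ[ℂ] H)).topologicalClosure.orthogonalProjectionOnto

/-- `U` is a partial isometry: `U^*U` is an orthogonal projection
(a self-adjoint idempotent). -/
def IsPartialIsometryOp (U : H →L[ℂ] H) : Prop :=
  IsSelfAdjoint (adjoint U * U) ∧ (adjoint U * U) * (adjoint U * U) = adjoint U * U

/-- `T = U|T|` is the polar decomposition of `T`: `U` is a partial isometry and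
`U^*U` is the orthogonal projection onto the closure of the range of `T^*`. -/
def IsPolarDecompositionOp (T U : H →L[ℂ] H) : Prop :=
  T = U * absOp T ∧ IsPartialIsometryOp U ∧ adjoint U * U = rangeProjOp (adjoint T)

/-- `T` (with polar decomposition `T = U|T|`) is `n`-centered: for every
`1 ≤ k ≤ n`, `T^k = U^k |T^k|` is the polar decomposition of `T^k`. -/
def IsNCentered (n : ℕ) (T U : H →L[ℂ] H) : Prop :=
  ∀ k : ℕ, 1 ≤ k → k ≤ n → IsPolarDecompositionOp (T ^ k) (U ^ k)

/-! ### Auxiliary general lemmas -/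

lemma absOp_nonneg (X : H →L[ℂ] H) : 0 ≤ absOp X :=
  cfc_nonneg fun x _ => Real.sqrt_nonneg x

lemma absOp_eq {X R : H →L[ℂ] H} (hR : 0 ≤ R) (hR2 : R * R = adjoint X * X) :
    absOp X = R := by
  have ha : (0 : H →L[ℂ] H) ≤ adjoint X * X := by
    simpa [star_eq_adjoint] using star_mul_self_nonneg X
  have hS : 0 ≤ absOp X := absOp_nonneg X
  have hS2 : absOp X * absOp X = adjoint X * X := by
    rw [absOp, ← cfc_mul ..]
    conv_rhs => rw [← cfc_id ℝ (adjoint X * X)]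
    exact cfc_congr fun x hx => Real.mul_self_sqrt (spectrum_nonneg_of_nonneg ha hx)
  calc absOp X = CFC.sqrt (adjoint X * X) := (CFC.sqrt_unique hS2 hS).symm
    _ = R := CFC.sqrt_unique hR2 hR

lemma absOp_isSelfAdjoint (X : H →L[ℂ] H) : IsSelfAdjoint (absOp X) :=
  IsSelfAdjoint.of_nonneg (absOp_nonneg X)

lemma eq_rangeProjOp {A P : H →L[ℂ] H} (hP : IsSelfAdjoint P) (hP2 : P * P = P)
    (hr : (LinearMap.range (A : H →ₗ[ℂ] H)).topologicalClosure = LinearMap.range (P : H →ₗ[ℂ] H)) :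
    P = rangeProjOp A := by
  ext x
  have hm : P x ∈ (LinearMap.range (A : H →ₗ[ℂ] H)).topologicalClosure := by
    rw [hr]; exact LinearMap.mem_range_self _ x
  have key : ((LinearMap.range (A : H →ₗ[ℂ] H)).topologicalClosure.orthogonalProjectionOnto x : H) = P x := by
    refine Submodule.eq_starProjection_of_mem_of_inner_eq_zero hm ?_
    intro w hw
    rw [hr] at hw
    obtain ⟨z, rfl⟩ := hw
    change inner ℂ (x - P x) (P z) = 0
    rw [← adjoint_inner_left]
    have hxP : adjoint P (x - P x) = 0 := by
      have hsa : adjoint P = P := hP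
      rw [hsa, map_sub]
      have hpp : P (P x) = (P * P) x := rfl
      rw [hpp, hP2, sub_self]
    rw [hxP, inner_zero_left]
  show P x = _
  rw [rangeProjOp]
  simp [key]

lemma range_closure_eq [FiniteDimensional ℂ H] {A P G : H →L[ℂ] H}
    (h1 : P * A = A) (h2 : A * G = P) :
    (LinearMap.range (A : H →ₗ[ℂ] H)).topologicalClosure = LinearMap.range (P : H →ₗ[ℂ] H) := by
  rw [(Submodule.closed_of_finiteDimensional (LinearMap.range (A : H →ₗ[ℂ] H))).submodule_topologicalClosure_eq]
  apply le_antisymm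
  · rintro x ⟨y, rfl⟩
    refine ⟨A y, ?_⟩
    calc P (A y) = (P * A) y := rfl
      _ = A y := by rw [h1]
  · rintro x ⟨y, rfl⟩
    refine ⟨G y, ?_⟩
    calc A (G y) = (A * G) y := rfl
      _ = P y := by rw [h2]

/-! ### Structured matrices: shifts and block diagonals -/

open Matrix

abbrev Mtwo := Matrix (Fin 2) (Fin 2) ℂ

def shiftM (m k : ℕ) (w : ℕ → Mtwo) : Matrix (Fin m × Fin 2) (Fin m × Fin 2) ℂ :=
  Matrix.of fun p q => if p.1.1 = q.1.1 + k then w q.1.1 p.2 q.2 else 0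

def coShiftM (m k : ℕ) (w : ℕ → Mtwo) : Matrix (Fin m × Fin 2) (Fin m × Fin 2) ℂ :=
  Matrix.of fun p q => if q.1.1 = p.1.1 + k then w p.1.1 p.2 q.2 else 0

def diagM (m : ℕ) (d : ℕ → Mtwo) : Matrix (Fin m × Fin 2) (Fin m × Fin 2) ℂ :=
  Matrix.of fun p q => if p.1 = q.1 then d p.1.1 p.2 q.2 else 0

lemma conjTranspose_shiftM (m k : ℕ) (w : ℕ → Mtwo) :
    (shiftM m k w)ᴴ = coShiftM m k (fun i => (w i)ᴴ) := by
  ext p q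
  simp only [Matrix.conjTranspose_apply, shiftM, coShiftM, Matrix.of_apply]
  by_cases h : q.1.1 = p.1.1 + k
  · rw [if_pos h, if_pos h]
  · rw [if_neg h, if_neg h, star_zero]

lemma conjTranspose_diagM (m : ℕ) (d : ℕ → Mtwo) :
    (diagM m d)ᴴ = diagM m (fun i => (d i)ᴴ) := by
  ext p q
  simp only [Matrix.conjTranspose_apply, diagM, Matrix.of_apply]
  by_cases h : p.1 = q.1
  · rw [if_pos h.symm, if_pos h, h]
  · rw [if_neg (fun hh => h hh.symm), if_neg h, star_zero]

lemma shiftM_mul_shiftM (m k l : ℕ) (w v : ℕ → Mtwo) :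
    shiftM m k w * shiftM m l v = shiftM m (k + l) (fun i => w (i + l) * v i) := by
  ext p q
  rw [Matrix.mul_apply, Fintype.sum_prod_type]
  simp only [shiftM, Matrix.of_apply]
  by_cases hq : q.1.1 + l < m
  · rw [Finset.sum_eq_single (⟨q.1.1 + l, hq⟩ : Fin m)]
    · by_cases hC : p.1.1 = q.1.1 + l + k
      · have hC' : p.1.1 = q.1.1 + (k + l) := by omega
        simp [hC, hC', Matrix.mul_apply, show q.1.1 + l + k = q.1.1 + (k + l) by omega]
      · have hC' : ¬ p.1.1 = q.1.1 + (k + l) := by omega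
        simp [hC, hC']
    · intro j _ hj
      have : ¬ (j.1 = q.1.1 + l) := fun hh => hj (Fin.ext hh)
      simp [this]
    · intro h; exact absurd (Finset.mem_univ _) h
  · have h1 : ¬ p.1.1 = q.1.1 + (k + l) := by have := p.1.2; omega
    rw [if_neg h1]
    apply Finset.sum_eq_zero
    intro j _
    have : ¬ (j.1 = q.1.1 + l) := by have := j.2; omega
    simp [this]

lemma shiftM_mul_diagM (m k : ℕ) (w : ℕ → Mtwo) (d : ℕ → Mtwo) :
    shiftM m k w * diagM m d = shiftM m k (fun i => w i * d i) := by
  ext p q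
  rw [Matrix.mul_apply, Fintype.sum_prod_type]
  simp only [shiftM, diagM, Matrix.of_apply]
  rw [Finset.sum_eq_single q.1]
  · by_cases hC : p.1.1 = q.1.1 + k
    · simp [hC, Matrix.mul_apply]
    · simp [hC]
  · intro j _ hj
    simp [if_neg hj]
  · intro h; exact absurd (Finset.mem_univ _) h

lemma diagM_mul_coShiftM (m k : ℕ) (d : ℕ → Mtwo) (v : ℕ → Mtwo) :
    diagM m d * coShiftM m k v = coShiftM m k (fun i => d i * v i) := by
  ext p q
  rw [Matrix.mul_apply, Fintype.sum_prod_type]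
  simp only [coShiftM, diagM, Matrix.of_apply]
  rw [Finset.sum_eq_single p.1]
  · by_cases hC : q.1.1 = p.1.1 + k
    · simp [hC, Matrix.mul_apply]
    · simp [hC]
  · intro j _ hj
    simp [if_neg (fun hh => hj (Eq.symm hh))]
  · intro h; exact absurd (Finset.mem_univ _) h

lemma diagM_mul_diagM (m : ℕ) (d e : ℕ → Mtwo) :
    diagM m d * diagM m e = diagM m (fun i => d i * e i) := by
  ext p q
  rw [Matrix.mul_apply, Fintype.sum_prod_type]
  simp only [diagM, Matrix.of_apply]
  rw [Finset.sum_eq_single p.1]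
  · by_cases hC : p.1 = q.1
    · simp [hC, Matrix.mul_apply]
    · simp [hC]
  · intro j _ hj
    simp [if_neg (fun hh => hj (Eq.symm hh))]
  · intro h; exact absurd (Finset.mem_univ _) h

lemma coShiftM_mul_shiftM (m k : ℕ) (w v : ℕ → Mtwo) :
    coShiftM m k w * shiftM m k v =
      diagM m (fun i => if i + k < m then w i * v i else 0) := by
  ext p q
  rw [Matrix.mul_apply, Fintype.sum_prod_type]
  simp only [coShiftM, shiftM, diagM, Matrix.of_apply]
  by_cases hp : p.1.1 + k < m
  · rw [Finset.sum_eq_single (⟨p.1.1 + k, hp⟩ : Fin m)]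
    · by_cases hC : p.1 = q.1
      · have hv : p.1.1 = q.1.1 := by rw [hC]
        have hp' : q.1.1 + k < m := hv ▸ hp
        simp [hC, hv, hp', Matrix.mul_apply]
      · have hv : ¬ (p.1.1 = q.1.1) := fun hh => hC (Fin.ext hh)
        simp [hC, hv, fun hh : p.1.1 + k = q.1.1 + k => hv (by omega)]
    · intro j _ hj
      have : ¬ (j.1 = p.1.1 + k) := fun hh => hj (Fin.ext hh)
      simp [this]
    · intro h; exact absurd (Finset.mem_univ _) h
  · have hz : ∀ j : Fin m, ¬ (j.1 = p.1.1 + k) := by intro j; have := j.2; omega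
    rw [Finset.sum_eq_zero (fun j _ => by simp [hz j])]
    by_cases hC : p.1 = q.1
    · have hp' : ¬ (q.1.1 + k < m) := fun hh => hp (hC ▸ hh)
      simp [hC, hp']
    · simp [hC]

lemma shiftM_zero_one (m : ℕ) : shiftM m 0 (fun _ => 1) = 1 := by
  ext p q
  rcases p with ⟨pi, pa⟩; rcases q with ⟨qi, qa⟩
  simp only [shiftM, Matrix.of_apply, add_zero]
  by_cases h1 : pi.1 = qi.1
  · have hpq : pi = qi := Fin.ext h1
    subst hpq
    simp [Matrix.one_apply, Prod.ext_iff]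
  · have hne : ¬ ((pi, pa) = (qi, qa)) := fun hh => h1 (by cases hh; rfl)
    simp [h1, Matrix.one_apply, hne]

lemma shiftM_mul_entry (m k : ℕ) (w : ℕ → Mtwo)
    (M : Matrix (Fin m × Fin 2) (Fin m × Fin 2) ℂ)
    (p q : Fin m × Fin 2) (j0 : Fin m) (hp : p.1.1 = j0.1 + k) :
    (shiftM m k w * M) p q = ∑ b : Fin 2, w j0.1 p.2 b * M (j0, b) q := by
  rw [Matrix.mul_apply, Fintype.sum_prod_type]
  rw [Finset.sum_eq_single j0]
  · simp [shiftM, hp]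
  · intro j _ hj
    have : ¬ (p.1.1 = j.1 + k) := fun hh => hj (Fin.ext (by omega))
    simp [shiftM, this]
  · intro h; exact absurd (Finset.mem_univ _) h

/-! ### The concrete 2×2 weights -/

def Pm : Mtwo := !![2,3;3,5]
def Pr : Mtwo := !![1,1;1,2]
def Pinv : Mtwo := !![5,-3;-3,2]
def Bm : Mtwo := !![1,0;0,4]
def Br : Mtwo := !![1,0;0,2]
noncomputable def Binv : Mtwo := !![1,0;0,(4:ℂ)⁻¹]

lemma Pr_mul_Pr : Pr * Pr = Pm := by
  ext i j; fin_cases i <;> fin_cases j <;>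
    norm_num [Pr, Pm, Matrix.mul_apply, Fin.sum_univ_two]

lemma Br_mul_Br : Br * Br = Bm := by
  ext i j; fin_cases i <;> fin_cases j <;>
    norm_num [Br, Bm, Matrix.mul_apply, Fin.sum_univ_two]

lemma Pm_mul_Pinv : Pm * Pinv = 1 := by
  ext i j; fin_cases i <;> fin_cases j <;>
    norm_num [Pm, Pinv, Matrix.mul_apply, Fin.sum_univ_two, Matrix.one_apply]

lemma Bm_mul_Binv : Bm * Binv = 1 := by
  ext i j; fin_cases i <;> fin_cases j <;>
    norm_num [Bm, Binv, Matrix.mul_apply, Fin.sum_univ_two, Matrix.one_apply]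

lemma Pm_conj : Pmᴴ = Pm := by
  ext i j; fin_cases i <;> fin_cases j <;>
    simp [Pm, Matrix.conjTranspose_apply]

lemma Pr_conj : Prᴴ = Pr := by
  ext i j; fin_cases i <;> fin_cases j <;>
    simp [Pr, Matrix.conjTranspose_apply]

lemma Bm_conj : Bmᴴ = Bm := by
  ext i j; fin_cases i <;> fin_cases j <;>
    simp [Bm, Matrix.conjTranspose_apply]

lemma Br_conj : Brᴴ = Br := by
  ext i j; fin_cases i <;> fin_cases j <;>
    simp [Br, Matrix.conjTranspose_apply]

lemma BP_entry01 : (Bm * Pm) 0 1 = 3 := by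
  norm_num [Bm, Pm, Matrix.mul_apply, Fin.sum_univ_two]

lemma BP_entry10 : (Bm * Pm) 1 0 = 12 := by
  norm_num [Bm, Pm, Matrix.mul_apply, Fin.sum_univ_two]

/-! ### Weight sequences -/

def wTf (n : ℕ) : ℕ → Mtwo := fun i =>
  if n + 1 ≤ i then 0 else if i = 0 then Pm else if i = n then Bm else 1
def wUf (n : ℕ) : ℕ → Mtwo := fun i => if n + 1 ≤ i then 0 else 1
def Wc (n k : ℕ) : ℕ → Mtwo := fun i =>
  if n + 1 < i + k then 0 else if i = 0 then Pm else if i + k = n + 1 then Bm else 1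
def Rc (n k : ℕ) : ℕ → Mtwo := fun i =>
  if n + 1 < i + k then 0 else if i = 0 then Pr else if i + k = n + 1 then Br else 1
noncomputable def Wcinv (n k : ℕ) : ℕ → Mtwo := fun i =>
  if n + 1 < i + k then 0 else if i = 0 then Pinv else if i + k = n + 1 then Binv else 1
def Vc (n k : ℕ) : ℕ → Mtwo := fun i => if n + 1 < i + k then 0 else 1

noncomputable def Wp (n : ℕ) : ℕ → ℕ → Mtwo
  | 0, _ => 1
  | (k+1), i => Wp n k (i+1) * wTf n i

lemma Wp_zero (n i : ℕ) : Wp n 0 i = 1 := rfl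
lemma Wp_succ (n k i : ℕ) : Wp n (k+1) i = Wp n k (i+1) * wTf n i := rfl

section PW
variable {n : ℕ}

lemma Rc_mul_Rc (k i : ℕ) : Rc n k i * Rc n k i = Wc n k i := by
  unfold Rc Wc
  split_ifs <;> simp [Pr_mul_Pr, Br_mul_Br]

lemma Rc_conj' (k i : ℕ) : (Rc n k i)ᴴ = Rc n k i := by
  unfold Rc; split_ifs <;> simp [Pr_conj, Br_conj]

lemma Wc_conj' (k i : ℕ) : (Wc n k i)ᴴ = Wc n k i := by
  unfold Wc; split_ifs <;> simp [Pm_conj, Bm_conj]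

lemma Wc_mul_Wcinv (k i : ℕ) (h : i + k < n + 2) : Wc n k i * Wcinv n k i = 1 := by
  unfold Wc Wcinv
  split_ifs <;> first
    | contradiction
    | omega
    | simp [Pm_mul_Pinv, Bm_mul_Binv]

lemma Vc_mul_Wc (k i : ℕ) : Vc n k i * Wc n k i = Wc n k i := by
  unfold Vc Wc
  split_ifs <;> first | contradiction | omega | simp

lemma Vc_mul_Vc (k i : ℕ) : Vc n k i * Vc n k i = Vc n k i := by
  unfold Vc; split_ifs <;> simp

lemma Vc_conj' (k i : ℕ) : (Vc n k i)ᴴ = Vc n k i := by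
  unfold Vc; split_ifs <;> simp

lemma Wc_zero (k i : ℕ) (h : n + 1 < i + k) : Wc n k i = 0 := by
  unfold Wc; rw [if_pos h]

lemma Vc_zero (k i : ℕ) (h : n + 1 < i + k) : Vc n k i = 0 := by
  unfold Vc; rw [if_pos h]

lemma Vc_one (k i : ℕ) (h : ¬ (n + 1 < i + k)) : Vc n k i = 1 := by
  unfold Vc; rw [if_neg h]

lemma Wp_eq_Wc : ∀ k, 1 ≤ k → k ≤ n → ∀ i, Wp n k i = Wc n k i := by
  intro k
  induction k with
  | zero => omega
  | succ k ih =>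
    intro _ hkn i
    by_cases hk1 : k = 0
    · subst hk1
      rw [Wp_succ, Wp_zero, one_mul]
      unfold wTf Wc
      split_ifs <;> first | contradiction | omega | rfl
    · have ih' := ih (by omega) (by omega)
      rw [Wp_succ, ih' (i+1)]
      unfold wTf Wc
      split_ifs <;> first
        | contradiction
        | omega
        | rfl
        | simp

lemma Wp_top (hn1 : 1 ≤ n) : Wp n (n+1) 0 = Bm * Pm := by
  rw [Wp_succ, Wp_eq_Wc n hn1 le_rfl 1]
  unfold Wc wTf
  split_ifs <;> first | contradiction | omega | rfl

lemma Wp_zero_of_high (k i : ℕ) (hk : 1 ≤ k) (hkn : k ≤ n) (h : n + 1 < i + k) :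
    Wp n k i = 0 := by
  rw [Wp_eq_Wc k hk hkn i, Wc_zero k i h]

/-! ### Powers of the shift matrices -/

lemma Tm_pow : ∀ k, (shiftM (n+2) 1 (wTf n)) ^ k = shiftM (n+2) k (Wp n k) := by
  intro k
  induction k with
  | zero =>
    rw [pow_zero]
    rw [show Wp n 0 = fun _ => (1 : Mtwo) from rfl]
    exact (shiftM_zero_one (n+2)).symm
  | succ k ih =>
    rw [pow_succ, ih, shiftM_mul_shiftM]
    congr 1

lemma Um_pow : ∀ k, 1 ≤ k → (shiftM (n+2) 1 (wUf n)) ^ k = shiftM (n+2) k (Vc n k) := by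
  intro k
  induction k with
  | zero => omega
  | succ k ih =>
    intro _
    by_cases hk1 : k = 0
    · subst hk1
      rw [pow_one]
      refine congrArg (shiftM (n+2) 1) ?_
      funext i
      unfold wUf Vc
      split_ifs <;> first | rfl | omega
    · rw [pow_succ, ih (by omega), shiftM_mul_shiftM]
      refine congrArg (shiftM (n+2) (k+1)) ?_
      funext i
      show Vc n k (i+1) * wUf n i = Vc n (k+1) i
      unfold Vc wUf
      split_ifs <;> first | contradiction | omega | simp

end PW

/-- For every `n ≥ 2` there is a Hilbert space operator that is `n`-centered
but not `(n+1)`-centered. -/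
theorem exists_isNCentered_not_succ_centered (n : ℕ) (hn : 2 ≤ n) :
    ∃ (H : Type) (_ : NormedAddCommGroup H) (_ : InnerProductSpace ℂ H)
      (_ : CompleteSpace H) (T U : H →L[ℂ] H),
      IsPolarDecompositionOp T U ∧ IsNCentered n T U ∧
        ¬ IsNCentered (n + 1) T U := by
  classical
  have hn1 : 1 ≤ n := by omega
  set ι := (Fin (n+2) × Fin 2) with hι
  let Φ := Matrix.toEuclideanCLM (𝕜 := ℂ) (n := ι)
  let Tm := shiftM (n+2) 1 (wTf n)
  let Um := shiftM (n+2) 1 (wUf n)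
  have hadj : ∀ M : Matrix ι ι ℂ, adjoint (Φ M) = Φ Mᴴ := by
    intro M
    rw [← ContinuousLinearMap.star_eq_adjoint, ← map_star]
    rfl
  -- the key fact for 1 ≤ k ≤ n
  have key : ∀ k, 1 ≤ k → k ≤ n → IsPolarDecompositionOp ((Φ Tm) ^ k) ((Φ Um) ^ k) := by
    intro k hk1 hkn
    have hWfun : Wp n k = Wc n k := funext (Wp_eq_Wc k hk1 hkn)
    have hT : (Φ Tm) ^ k = Φ (shiftM (n+2) k (Wc n k)) := by
      rw [← _root_.map_pow]
      congr 1
      rw [show Tm ^ k = shiftM (n+2) k (Wp n k) from Tm_pow k, hWfun]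
    have hU : (Φ Um) ^ k = Φ (shiftM (n+2) k (Vc n k)) := by
      rw [← _root_.map_pow]
      congr 1
      exact Um_pow k hk1
    -- the absolute value of T^k
    have habs : absOp ((Φ Tm) ^ k) = Φ (diagM (n+2) (Wc n k)) := by
      apply absOp_eq
      · have hfact : Φ (diagM (n+2) (Wc n k)) =
            star (Φ (diagM (n+2) (Rc n k))) * Φ (diagM (n+2) (Rc n k)) := by
          rw [← map_star, ← _root_.map_mul]
          congr 1
          rw [show star (diagM (n+2) (Rc n k)) = (diagM (n+2) (Rc n k))ᴴ from rfl,
            conjTranspose_diagM, diagM_mul_diagM]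
          refine congrArg (diagM (n+2)) ?_
          funext i
          rw [Rc_conj', Rc_mul_Rc]
        rw [hfact]
        exact star_mul_self_nonneg _
      · rw [hT, hadj, ← _root_.map_mul, ← _root_.map_mul]
        congr 1
        rw [diagM_mul_diagM, conjTranspose_shiftM, coShiftM_mul_shiftM]
        refine congrArg (diagM (n+2)) ?_
        funext i
        by_cases h : i + k < n + 2
        · rw [if_pos h, Wc_conj']
        · rw [if_neg h, Wc_zero k i (by omega), mul_zero]
    -- U^k* U^k
    have hQ : adjoint ((Φ Um) ^ k) * (Φ Um) ^ k = Φ (diagM (n+2) (Vc n k)) := by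
      rw [hU, hadj, ← _root_.map_mul]
      congr 1
      rw [conjTranspose_shiftM, coShiftM_mul_shiftM]
      refine congrArg (diagM (n+2)) ?_
      funext i
      by_cases h : i + k < n + 2
      · rw [if_pos h, Vc_conj', Vc_mul_Vc]
      · rw [if_neg h, Vc_zero k i (by omega)]
    have hQsa : _root_.IsSelfAdjoint (Φ (diagM (n+2) (Vc n k))) := by
      rw [_root_.IsSelfAdjoint, ← map_star]
      congr 1
      rw [show star (diagM (n+2) (Vc n k)) = (diagM (n+2) (Vc n k))ᴴ from rfl,
        conjTranspose_diagM]
      refine congrArg (diagM (n+2)) ?_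
      funext i
      exact Vc_conj' k i
    have hQidem : Φ (diagM (n+2) (Vc n k)) * Φ (diagM (n+2) (Vc n k)) =
        Φ (diagM (n+2) (Vc n k)) := by
      rw [← _root_.map_mul]
      congr 1
      rw [diagM_mul_diagM]
      refine congrArg (diagM (n+2)) ?_
      funext i
      exact Vc_mul_Vc k i
    refine ⟨?_, ⟨?_, ?_⟩, ?_⟩
    · -- T^k = U^k |T^k|
      rw [habs, hT, hU, ← _root_.map_mul]
      congr 1
      rw [shiftM_mul_diagM]
      refine congrArg (shiftM (n+2) k) ?_
      funext i
      exact (Vc_mul_Wc k i).symm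
    · rw [hQ]; exact hQsa
    · rw [hQ]; exact hQidem
    · -- range projection
      rw [hQ]
      apply eq_rangeProjOp hQsa hQidem
      apply range_closure_eq (G := Φ (shiftM (n+2) k (Wcinv n k)))
      · -- P * A = A
        rw [hT, hadj, ← _root_.map_mul]
        congr 1
        rw [conjTranspose_shiftM, diagM_mul_coShiftM]
        refine congrArg (coShiftM (n+2) k) ?_
        funext i
        rw [Wc_conj', Vc_mul_Wc, ← Wc_conj']
      · -- A * G = P
        rw [hT, hadj, ← _root_.map_mul]
        congr 1
        rw [conjTranspose_shiftM, coShiftM_mul_shiftM]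
        refine congrArg (diagM (n+2)) ?_
        funext i
        by_cases h : i + k < n + 2
        · rw [if_pos h, Wc_conj', Wc_mul_Wcinv k i h, Vc_one k i (by omega)]
        · rw [if_neg h, Vc_zero k i (by omega)]
  refine ⟨EuclideanSpace ℂ ι, inferInstance, inferInstance, inferInstance, Φ Tm, Φ Um,
    ?_, ?_, ?_⟩
  · have h1 := key 1 le_rfl hn1
    rwa [pow_one, pow_one] at h1
  · exact fun k hk1 hkn => key k hk1 hkn
  · -- not (n+1)-centered
    intro hcent
    have h := (hcent (n+1) (by omega) le_rfl).1
    set A := absOp ((Φ Tm) ^ (n+1)) with hA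
    have hAsa : _root_.IsSelfAdjoint A := absOp_isSelfAdjoint _
    set Am := Φ.symm A with hAm
    have hΦAm : Φ Am = A := Φ.apply_symm_apply A
    have hAmc : Amᴴ = Am := by
      rw [show Amᴴ = star Am from rfl, hAm, ← map_star, hAsa]
    have hmat : shiftM (n+2) (n+1) (Wp n (n+1)) =
        shiftM (n+2) (n+1) (Vc n (n+1)) * Am := by
      apply Φ.injective
      show Φ (shiftM (n+2) (n+1) (Wp n (n+1))) = Φ (shiftM (n+2) (n+1) (Vc n (n+1)) * Am)
      rw [_root_.map_mul, hΦAm]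
      calc Φ (shiftM (n+2) (n+1) (Wp n (n+1))) = (Φ Tm) ^ (n+1) := by
            rw [← _root_.map_pow]
            congr 1
            exact (Tm_pow (n+1)).symm
        _ = (Φ Um) ^ (n+1) * A := h
        _ = Φ (shiftM (n+2) (n+1) (Vc n (n+1))) * A := by
            rw [← _root_.map_pow]
            congr 2
            exact Um_pow (n+1) (by omega)
    have hlt : n + 1 < n + 2 := by omega
    have h0 : (0:ℕ) < n + 2 := by omega
    set pI : Fin (n+2) := ⟨n+1, hlt⟩ with hpI
    set q0 : Fin (n+2) := ⟨0, h0⟩ with hq0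
    have hone : Vc n (n+1) 0 = 1 := by unfold Vc; rw [if_neg (by omega)]
    have hentry : ∀ a b : Fin 2, (Bm * Pm) a b = Am (q0, a) (q0, b) := by
      intro a b
      have lhs : shiftM (n+2) (n+1) (Wp n (n+1)) (pI, a) (q0, b) = (Bm * Pm) a b := by
        show (if (pI.1 : ℕ) = (q0.1 : ℕ) + (n+1) then Wp n (n+1) q0.1 a b else 0) = _
        rw [if_pos (by simp [hpI, hq0])]
        rw [show ((q0 : Fin (n+2)) : ℕ) = 0 from rfl, Wp_top hn1]
      have rhs : (shiftM (n+2) (n+1) (Vc n (n+1)) * Am) (pI, a) (q0, b) =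
          Am (q0, a) (q0, b) := by
        rw [shiftM_mul_entry (n+2) (n+1) (Vc n (n+1)) Am (pI, a) (q0, b) q0
          (by simp [hpI, hq0])]
        rw [show ((q0 : Fin (n+2)) : ℕ) = 0 from rfl, hone]
        simp [Matrix.one_apply]
      rw [← lhs, hmat, rhs]
    have e1 := hentry 0 1
    have e2 := hentry 1 0
    rw [BP_entry01] at e1
    rw [BP_entry10] at e2
    have hsym : Am (q0,(0:Fin 2)) (q0,(1:Fin 2)) = star (Am (q0,(1:Fin 2)) (q0,(0:Fin 2))) := by
      conv_lhs => rw [← hAmc]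
      rw [Matrix.conjTranspose_apply]
    rw [← e1, ← e2] at hsym
    norm_num at hsym
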